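/- Let N ≥ 2, let h, g ∈ ℂ^N be nonzero, let σ > 0, let a, b ≥ 0, and let 0 ≤ P_s ≤ P₀. Set u₁ = g/‖g‖, u₂ = h/‖h‖, ζ = |⟨u₁, u₂⟩|, and L(z) = 1 − (ζ√(1−z) − √((1−ζ²)z))² for z ∈ [0, 1]. Then the supremum over unit vectors x ∈ ℂ^N of [σ² + a + (P₀ − P_s)‖h‖²|⟨u₂, x⟩|²] / [σ² + b + (P₀ − P_s)‖g‖²|⟨u₁, x⟩|²] equals the maximum over z ∈ [0, 1] of [σ² + a + (P₀ − P_s)‖h‖² L(z)] / [σ² + b + (P₀ − P_s)‖g‖² z], and this supremum is attained. -/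

import Mathlib

open scoped ComplexConjugate
set_option maxHeartbeats 1000000
variable {E : Type*} [NormedAddCommGroup E] [InnerProductSpace ℂ E]
local notation "⟪" x ", " y "⟫" => @inner ℂ _ _ x y

lemma aux_inner_self {u : E} (h1 : ‖u‖ = 1) : ⟪u, u⟫ = 1 := by
  rw [inner_self_eq_norm_sq_to_K, h1]; norm_num

lemma aux_mul_conj (c : ℂ) : c * conj c = ((‖c‖ ^ 2 : ℝ) : ℂ) := by
  rw [Complex.mul_conj]; norm_cast; rw [Complex.normSq_eq_norm_sq]

lemma aux_vv {u₂ u₁ : E} (h1 : ‖u₁‖ = 1) (h2 : ‖u₂‖ = 1) :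
    ⟪u₂ - ⟪u₁, u₂⟫ • u₁, u₂ - ⟪u₁, u₂⟫ • u₁⟫ = ((1 : ℝ) - ‖⟪u₁, u₂⟫‖ ^ 2 : ℝ) := by
  set c : ℂ := ⟪u₁, u₂⟫ with hc
  have h21 : ⟪u₂, u₁⟫ = conj c := by rw [hc, inner_conj_symm]
  rw [inner_sub_sub_self, inner_smul_left, inner_smul_right, inner_smul_right,
    inner_smul_left, aux_inner_self h1, aux_inner_self h2, h21, ← hc]
  simp only [mul_comm (conj c) c, mul_one, aux_mul_conj c]
  push_cast; ring

lemma aux_norm_perp {u₂ u₁ : E} (h1 : ‖u₁‖ = 1) (h2 : ‖u₂‖ = 1) :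
    ‖u₂ - ⟪u₁, u₂⟫ • u₁‖ = Real.sqrt (1 - ‖⟪u₁, u₂⟫‖ ^ 2) := by
  have h3 : ‖u₂ - ⟪u₁, u₂⟫ • u₁‖ ^ 2 = 1 - ‖⟪u₁, u₂⟫‖ ^ 2 := by
    rw [← inner_self_eq_norm_sq (𝕜 := ℂ), aux_vv h1 h2]
    simp [← Complex.ofReal_pow]
  rw [← h3, Real.sqrt_sq (norm_nonneg _)]

lemma key_bound {u₁ u₂ x : E} (h1 : ‖u₁‖ = 1) (h2 : ‖u₂‖ = 1) (hx : ‖x‖ = 1) :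
    ‖⟪u₂, x⟫‖ ≤ ‖⟪u₁, u₂⟫‖ * ‖⟪u₁, x⟫‖ +
      Real.sqrt (1 - ‖⟪u₁, u₂⟫‖ ^ 2) * Real.sqrt (1 - ‖⟪u₁, x⟫‖ ^ 2) := by
  set c : ℂ := ⟪u₁, u₂⟫ with hc
  set d : ℂ := ⟪u₁, x⟫ with hd
  set v : E := u₂ - c • u₁ with hv
  set y : E := x - d • u₁ with hy
  have hu1v : ⟪u₁, v⟫ = 0 := by
    rw [hv, inner_sub_right, inner_smul_right, aux_inner_self h1, mul_one, ← hc, sub_self]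
  have hu1y : ⟪u₁, y⟫ = 0 := by
    rw [hy, inner_sub_right, inner_smul_right, aux_inner_self h1, mul_one, ← hd, sub_self]
  have hvu1 : ⟪v, u₁⟫ = 0 := by rw [← inner_conj_symm, hu1v, map_zero]
  have hdecomp : ⟪u₂, x⟫ = conj c * d + ⟪v, y⟫ := by
    have h2e : u₂ = c • u₁ + v := by rw [hv]; abel
    have hxe : x = d • u₁ + y := by rw [hy]; abel
    calc ⟪u₂, x⟫ = ⟪c • u₁ + v, d • u₁ + y⟫ := by rw [← h2e, ← hxe]
    _ = conj c * d + ⟪v, y⟫ := by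
        simp only [inner_add_left, inner_add_right, inner_smul_left,
          inner_smul_right, aux_inner_self h1, hu1y, hvu1]
        ring
  have hnv : ‖v‖ = Real.sqrt (1 - ‖c‖ ^ 2) := aux_norm_perp h1 h2
  have hny : ‖y‖ = Real.sqrt (1 - ‖d‖ ^ 2) := aux_norm_perp h1 hx
  calc ‖⟪u₂, x⟫‖ ≤ ‖conj c * d‖ + ‖⟪v, y⟫‖ := by rw [hdecomp]; exact norm_add_le _ _
  _ ≤ ‖c‖ * ‖d‖ + ‖v‖ * ‖y‖ := by
      rw [norm_mul, RCLike.norm_conj]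
      exact add_le_add le_rfl (norm_inner_le_norm v y)
  _ = _ := by rw [hnv, hny]

lemma aux_norm_perp_sq {u₂ u₁ : E} (h1 : ‖u₁‖ = 1) (h2 : ‖u₂‖ = 1) :
    ‖u₂ - ⟪u₁, u₂⟫ • u₁‖ ^ 2 = 1 - ‖⟪u₁, u₂⟫‖ ^ 2 := by
  rw [← inner_self_eq_norm_sq (𝕜 := ℂ), aux_vv h1 h2]
  simp [← Complex.ofReal_pow]

lemma exists_perp {N : ℕ} (hN : 2 ≤ N) (u₁ : EuclideanSpace ℂ (Fin N)) (h1 : ‖u₁‖ = 1) :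
    ∃ w : EuclideanSpace ℂ (Fin N), ‖w‖ = 1 ∧ ⟪u₁, w⟫ = 0 := by
  have hu1ne : u₁ ≠ 0 := by intro h; rw [h, norm_zero] at h1; norm_num at h1
  have hspan : (ℂ ∙ u₁) ≠ ⊤ := by
    intro htop
    have h1r : Module.finrank ℂ (EuclideanSpace ℂ (Fin N)) = 1 := by
      rw [← finrank_top ℂ, ← htop, finrank_span_singleton hu1ne]
    rw [finrank_euclideanSpace, Fintype.card_fin] at h1r
    omega
  obtain ⟨x, hx⟩ : ∃ x, x ∉ (ℂ ∙ u₁) := by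
    by_contra hcon
    push_neg at hcon
    exact hspan (Submodule.eq_top_iff'.2 hcon)
  set y := x - ⟪u₁, x⟫ • u₁ with hy
  have hyne : y ≠ 0 := by
    intro h0
    apply hx
    have hxy : x = ⟪u₁, x⟫ • u₁ := by rw [← sub_eq_zero]; exact h0
    rw [hxy]; exact Submodule.smul_mem _ _ (Submodule.mem_span_singleton_self u₁)
  have hu1y : ⟪u₁, y⟫ = 0 := by
    rw [hy, inner_sub_right, inner_smul_right, aux_inner_self h1, mul_one, sub_self]
  refine ⟨((‖y‖⁻¹ : ℝ) : ℂ) • y, ?_, ?_⟩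
  · rw [norm_smul, Complex.norm_real, Real.norm_of_nonneg (by positivity),
      inv_mul_cancel₀ (norm_ne_zero_iff.2 hyne)]
  · rw [inner_smul_right, hu1y, mul_zero]

lemma key_exists {N : ℕ} (hN : 2 ≤ N) (u₁ u₂ : EuclideanSpace ℂ (Fin N))
    (h1 : ‖u₁‖ = 1) (h2 : ‖u₂‖ = 1) {z : ℝ} (hz0 : 0 ≤ z) (hz1 : z ≤ 1) :
    ∃ x : EuclideanSpace ℂ (Fin N), ‖x‖ = 1 ∧ ‖⟪u₁, x⟫‖ ^ 2 = z ∧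
      ‖⟪u₂, x⟫‖ = ‖⟪u₁, u₂⟫‖ * Real.sqrt z +
        Real.sqrt (1 - ‖⟪u₁, u₂⟫‖ ^ 2) * Real.sqrt (1 - z) := by
  set c : ℂ := ⟪u₁, u₂⟫ with hc
  obtain ⟨w, hwnorm, hwu1, hwu2⟩ :
      ∃ w, ‖w‖ = 1 ∧ ⟪u₁, w⟫ = 0 ∧ ⟪u₂, w⟫ = ((Real.sqrt (1 - ‖c‖ ^ 2) : ℝ) : ℂ) := by
    by_cases hv : u₂ - c • u₁ = 0
    · obtain ⟨w, hw1, hw2⟩ := exists_perp hN u₁ h1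
      refine ⟨w, hw1, hw2, ?_⟩
      have hu2 : u₂ = c • u₁ := by rw [← sub_eq_zero]; exact hv
      have hcnorm : ‖c‖ = 1 := by
        have hcn := congrArg norm hu2
        rw [h2, norm_smul, h1, mul_one] at hcn; exact hcn.symm
      rw [hu2, inner_smul_left, hw2, mul_zero, hcnorm]
      norm_num
    · have hnv : ‖u₂ - c • u₁‖ = Real.sqrt (1 - ‖c‖ ^ 2) := aux_norm_perp h1 h2
      have hnvsq : ‖u₂ - c • u₁‖ ^ 2 = 1 - ‖c‖ ^ 2 := aux_norm_perp_sq h1 h2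
      have hu2v : ⟪u₂, u₂ - c • u₁⟫ = ((‖u₂ - c • u₁‖ ^ 2 : ℝ) : ℂ) := by
        have h21 : ⟪u₂, u₁⟫ = conj c := by rw [hc, inner_conj_symm]
        rw [inner_sub_right, inner_smul_right, aux_inner_self h2, h21, aux_mul_conj, hnvsq]
        push_cast; ring
      refine ⟨((‖u₂ - c • u₁‖⁻¹ : ℝ) : ℂ) • (u₂ - c • u₁), ?_, ?_, ?_⟩
      · rw [norm_smul, Complex.norm_real, Real.norm_of_nonneg (by positivity),
          inv_mul_cancel₀ (norm_ne_zero_iff.2 hv)]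
      · have hu1v : ⟪u₁, u₂ - c • u₁⟫ = 0 := by
          rw [inner_sub_right, inner_smul_right, aux_inner_self h1, mul_one, ← hc, sub_self]
        rw [inner_smul_right, hu1v, mul_zero]
      · rw [inner_smul_right, hu2v, ← hnv, ← Complex.ofReal_mul]
        have hvne : ‖u₂ - c • u₁‖ ≠ 0 := norm_ne_zero_iff.2 hv
        norm_cast
        field_simp
  -- build x
  set φ : ℂ := if c = 0 then 1 else c * (((‖c‖ : ℝ) : ℂ))⁻¹ with hφ
  have hφn : ‖φ‖ = 1 := by
    by_cases h0 : c = 0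
    · simp [hφ, h0]
    · rw [hφ, if_neg h0, norm_mul, norm_inv, Complex.norm_real, Real.norm_of_nonneg (by positivity),
        mul_inv_cancel₀ (norm_ne_zero_iff.2 h0)]
  have hcφ : conj c * φ = ((‖c‖ : ℝ) : ℂ) := by
    by_cases h0 : c = 0
    · simp [hφ, h0]
    · have hcc : ((‖c‖ : ℝ) : ℂ) ≠ 0 := by
        simpa using norm_ne_zero_iff.2 h0
      rw [hφ, if_neg h0, ← mul_assoc, mul_comm (conj c) c, aux_mul_conj,
        Complex.ofReal_pow, sq, mul_assoc, mul_inv_cancel₀ hcc, mul_one]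
  set s : ℂ := ((Real.sqrt z : ℝ) : ℂ) * φ with hs
  set t : ℂ := ((Real.sqrt (1 - z) : ℝ) : ℂ) with ht
  have hsn : ‖s‖ = Real.sqrt z := by
    rw [hs, norm_mul, hφn, mul_one, Complex.norm_real, Real.norm_of_nonneg (Real.sqrt_nonneg z)]
  have htn : ‖t‖ = Real.sqrt (1 - z) := by
    rw [ht, Complex.norm_real, Real.norm_of_nonneg (Real.sqrt_nonneg _)]
  refine ⟨s • u₁ + t • w, ?_, ?_, ?_⟩
  · have hcross : ⟪s • u₁, t • w⟫ = 0 := by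
      rw [inner_smul_left, inner_smul_right, hwu1, mul_zero, mul_zero]
    have hnsq : ‖s • u₁ + t • w‖ ^ 2 = 1 := by
      rw [norm_add_sq (𝕜 := ℂ), hcross, norm_smul, norm_smul, h1, hwnorm, hsn, htn]
      simp only [map_zero, mul_one]
      rw [Real.sq_sqrt hz0, Real.sq_sqrt (by linarith)]
      ring
    nlinarith [norm_nonneg (s • u₁ + t • w)]
  · rw [inner_add_right, inner_smul_right, inner_smul_right, aux_inner_self h1, hwu1,
      mul_zero, mul_one, add_zero, hsn, Real.sq_sqrt hz0]
  · have h21 : ⟪u₂, u₁⟫ = conj c := by rw [hc, inner_conj_symm]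
    rw [inner_add_right, inner_smul_right, inner_smul_right, h21, hwu2, hs, ht]
    have : ((Real.sqrt z : ℝ) : ℂ) * φ * conj c + ((Real.sqrt (1 - z) : ℝ) : ℂ) *
        ((Real.sqrt (1 - ‖c‖ ^ 2) : ℝ) : ℂ) =
        ((‖c‖ * Real.sqrt z + Real.sqrt (1 - ‖c‖ ^ 2) * Real.sqrt (1 - z) : ℝ) : ℂ) := by
      rw [mul_assoc, mul_comm φ (conj c), hcφ]
      push_cast; ring
    rw [this, Complex.norm_real, Real.norm_of_nonneg (by positivity)]

lemma LM_eq {ζ z : ℝ} (hζ0 : 0 ≤ ζ) (hζ1 : ζ ≤ 1) (hz0 : 0 ≤ z) (hz1 : z ≤ 1) :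
    1 - (ζ * Real.sqrt (1 - z) - Real.sqrt ((1 - ζ ^ 2) * z)) ^ 2 =
      (ζ * Real.sqrt z + Real.sqrt (1 - ζ ^ 2) * Real.sqrt (1 - z)) ^ 2 := by
  rw [Real.sqrt_mul (by nlinarith)]
  have h1 := Real.sq_sqrt hz0
  have h2 := Real.sq_sqrt (show (0:ℝ) ≤ 1 - z by linarith)
  have h3 := Real.sq_sqrt (show (0:ℝ) ≤ 1 - ζ ^ 2 by nlinarith)
  nlinarith [Real.sqrt_nonneg z, Real.sqrt_nonneg (1 - z), Real.sqrt_nonneg (1 - ζ ^ 2)]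

theorem stmt6 {N : ℕ} (hN : 2 ≤ N)
    (h g : EuclideanSpace ℂ (Fin N)) (hh : h ≠ 0) (hg : g ≠ 0)
    (σ a b Ps P₀ : ℝ) (hσ : 0 < σ) (ha : 0 ≤ a) (hb : 0 ≤ b)
    (hPs0 : 0 ≤ Ps) (hPsP : Ps ≤ P₀)
    (ζ : ℝ) (hζ : ζ = ‖(inner ℂ (‖g‖⁻¹ • g) (‖h‖⁻¹ • h) : ℂ)‖)
    (L : ℝ → ℝ)
    (hL : ∀ z, L z = 1 - (ζ * Real.sqrt (1 - z) - Real.sqrt ((1 - ζ ^ 2) * z)) ^ 2) :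
    ∃ m : ℝ,
      IsGreatest {v : ℝ | ∃ x : EuclideanSpace ℂ (Fin N), ‖x‖ = 1 ∧
        v = (σ ^ 2 + a + (P₀ - Ps) * ‖h‖ ^ 2 *
              ‖(inner ℂ (‖h‖⁻¹ • h) x : ℂ)‖ ^ 2) /
            (σ ^ 2 + b + (P₀ - Ps) * ‖g‖ ^ 2 *
              ‖(inner ℂ (‖g‖⁻¹ • g) x : ℂ)‖ ^ 2)} m ∧
      IsGreatest {v : ℝ | ∃ z ∈ Set.Icc (0 : ℝ) 1,
        v = (σ ^ 2 + a + (P₀ - Ps) * ‖h‖ ^ 2 * L z) /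
            (σ ^ 2 + b + (P₀ - Ps) * ‖g‖ ^ 2 * z)} m := by
  set u₁ : EuclideanSpace ℂ (Fin N) := ‖g‖⁻¹ • g with hu₁
  set u₂ : EuclideanSpace ℂ (Fin N) := ‖h‖⁻¹ • h with hu₂
  have h1 : ‖u₁‖ = 1 := norm_smul_inv_norm hg
  have h2 : ‖u₂‖ = 1 := norm_smul_inv_norm hh
  have hζ' : ζ = ‖(⟪u₁, u₂⟫ : ℂ)‖ := by rw [hζ]
  have hζ0 : 0 ≤ ζ := by rw [hζ']; exact norm_nonneg _
  have hζ1 : ζ ≤ 1 := by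
    rw [hζ']
    calc ‖(⟪u₁, u₂⟫ : ℂ)‖ ≤ ‖u₁‖ * ‖u₂‖ := norm_inner_le_norm u₁ u₂
    _ = 1 := by rw [h1, h2]; ring
  set A : ℝ := σ ^ 2 + a with hA
  set B : ℝ := σ ^ 2 + b with hB
  set C : ℝ := (P₀ - Ps) * ‖h‖ ^ 2 with hC
  set D : ℝ := (P₀ - Ps) * ‖g‖ ^ 2 with hD
  have hBpos : 0 < B := by positivity
  have hCnn : 0 ≤ C := by
    apply mul_nonneg (by linarith) (by positivity)
  have hDnn : 0 ≤ D := by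
    apply mul_nonneg (by linarith) (by positivity)
  set f : ℝ → ℝ := fun z => (A + C * L z) / (B + D * z) with hf
  have hden : ∀ z ∈ Set.Icc (0:ℝ) 1, 0 < B + D * z := by
    intro z hz
    have := mul_nonneg hDnn hz.1
    linarith
  have hfc : ContinuousOn f (Set.Icc 0 1) := by
    have hLc : Continuous L := by
      have hLe : L = fun z => 1 - (ζ * Real.sqrt (1 - z) - Real.sqrt ((1 - ζ ^ 2) * z)) ^ 2 :=
        funext hL
      rw [hLe]; fun_prop
    apply ContinuousOn.div
    · exact (continuous_const.add (continuous_const.mul hLc)).continuousOn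
    · fun_prop
    · intro z hz; exact (hden z hz).ne'
  obtain ⟨z₀, hz₀, hmax⟩ := isCompact_Icc.exists_isMaxOn (Set.nonempty_Icc.2 zero_le_one)
    hfc
  have hLM : ∀ z ∈ Set.Icc (0:ℝ) 1,
      L z = (ζ * Real.sqrt z + Real.sqrt (1 - ζ ^ 2) * Real.sqrt (1 - z)) ^ 2 := by
    intro z hz
    rw [hL]; exact LM_eq hζ0 hζ1 hz.1 hz.2
  refine ⟨f z₀, ⟨?_, ?_⟩, ⟨z₀, hz₀, rfl⟩, ?_⟩
  · -- membership in the x-set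
    obtain ⟨x₀, hx₀n, hx₀1, hx₀2⟩ := key_exists hN u₁ u₂ h1 h2 hz₀.1 hz₀.2
    refine ⟨x₀, hx₀n, ?_⟩
    have he2 : ‖(⟪u₂, x₀⟫ : ℂ)‖ ^ 2 = L z₀ := by
      rw [hx₀2, ← hζ', hLM z₀ hz₀]
    show f z₀ = (A + C * ‖(⟪u₂, x₀⟫ : ℂ)‖ ^ 2) /
        (B + D * ‖(⟪u₁, x₀⟫ : ℂ)‖ ^ 2)
    rw [hx₀1, he2]
  · -- upper bound for the x-set
    rintro v ⟨x, hx, rfl⟩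
    show (A + C * ‖(⟪u₂, x⟫ : ℂ)‖ ^ 2) /
        (B + D * ‖(⟪u₁, x⟫ : ℂ)‖ ^ 2) ≤ f z₀
    set dd : ℝ := ‖(⟪u₁, x⟫ : ℂ)‖ with hdd
    have hdd0 : 0 ≤ dd := norm_nonneg _
    have hdd1 : dd ≤ 1 := by
      calc dd ≤ ‖u₁‖ * ‖x‖ := norm_inner_le_norm u₁ x
      _ = 1 := by rw [h1, hx]; ring
    have hzmem : dd ^ 2 ∈ Set.Icc (0:ℝ) 1 := ⟨by positivity, by nlinarith⟩
    have hkb := key_bound h1 h2 hx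
    rw [← hζ', ← hdd] at hkb
    have hsq : Real.sqrt (dd ^ 2) = dd := Real.sqrt_sq hdd0
    have he2 : ‖(⟪u₂, x⟫ : ℂ)‖ ^ 2 ≤ L (dd ^ 2) := by
      rw [hLM _ hzmem, hsq]
      have hrhs : 0 ≤ ζ * dd + Real.sqrt (1 - ζ ^ 2) * Real.sqrt (1 - dd ^ 2) := by
        positivity
      nlinarith [norm_nonneg (⟪u₂, x⟫ : ℂ)]
    have step1 : (A + C * ‖(⟪u₂, x⟫ : ℂ)‖ ^ 2) / (B + D * dd ^ 2) ≤ f (dd ^ 2) := by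
      show _ ≤ (A + C * L (dd ^ 2)) / (B + D * dd ^ 2)
      refine (div_le_div_iff_of_pos_right (hden _ hzmem)).2 ?_
      nlinarith
    exact le_trans step1 (hmax hzmem)
  · -- upper bound for the z-set
    rintro v ⟨z, hz, rfl⟩
    exact hmax hz
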